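/- Let α_1 ≥ α_2 ≥ ... ≥ α_d ≥ 0 be real numbers and a_1,...,a_d, b_1,...,b_d complex numbers. Then α_1² + (Σ_j |a_j|²)(Σ_l |b_l|²) − Σ_j α_j (a_j b_j + conj(a_j) conj(b_j)) ≥ 0. -/

import Mathlib

/-- For α₁ ≥ ... ≥ α_d ≥ 0 and complex a_j, b_j,
α₁² + (Σ|a_j|²)(Σ|b_l|²) − Σ α_j (a_j b_j + conj(a_j) conj(b_j)) ≥ 0. -/
theorem stmt_1 (d : ℕ) [NeZero d] (α : Fin d → ℝ)
    (hmono : Antitone α) (hnonneg : ∀ j, 0 ≤ α j)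
    (a b : Fin d → ℂ) :
    0 ≤ α 0 ^ 2 + (∑ j, ‖a j‖ ^ 2) * (∑ l, ‖b l‖ ^ 2)
      - ∑ j, α j * (a j * b j + (starRingEnd ℂ) (a j) * (starRingEnd ℂ) (b j)).re := by
  set S : ℝ := ∑ j, ‖a j‖ * ‖b j‖ with hSdef
  have hS0 : 0 ≤ S := Finset.sum_nonneg fun j _ =>
    mul_nonneg (norm_nonneg _) (norm_nonneg _)
  have hCS : S ^ 2 ≤ (∑ j, ‖a j‖ ^ 2) * (∑ l, ‖b l‖ ^ 2) := by
    simpa using Finset.sum_mul_sq_le_sq_mul_sq Finset.univ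
      (fun j => ‖a j‖) (fun j => ‖b j‖)
  have hterm : ∀ j : Fin d,
      α j * (a j * b j + (starRingEnd ℂ) (a j) * (starRingEnd ℂ) (b j)).re
        ≤ α 0 * (2 * (‖a j‖ * ‖b j‖)) := by
    intro j
    have hre : (a j * b j + (starRingEnd ℂ) (a j) * (starRingEnd ℂ) (b j)).re
        = 2 * (a j * b j).re := by
      simp only [Complex.add_re, Complex.mul_re, Complex.conj_re, Complex.conj_im]
      ring
    have habs : (a j * b j).re ≤ ‖a j‖ * ‖b j‖ := by
      calc (a j * b j).re ≤ ‖a j * b j‖ := Complex.re_le_norm _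
        _ = ‖a j‖ * ‖b j‖ := norm_mul _ _
    have h1 : α j * (2 * (a j * b j).re) ≤ α j * (2 * (‖a j‖ * ‖b j‖)) :=
      mul_le_mul_of_nonneg_left (by linarith) (hnonneg j)
    have h2 : α j ≤ α 0 := hmono (Fin.zero_le j)
    have h3 : 0 ≤ 2 * (‖a j‖ * ‖b j‖) := by
      positivity
    calc α j * (a j * b j + (starRingEnd ℂ) (a j) * (starRingEnd ℂ) (b j)).re
        = α j * (2 * (a j * b j).re) := by rw [hre]
      _ ≤ α j * (2 * (‖a j‖ * ‖b j‖)) := h1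
      _ ≤ α 0 * (2 * (‖a j‖ * ‖b j‖)) :=
          mul_le_mul_of_nonneg_right h2 h3
  have hsum : (∑ j, α j * (a j * b j + (starRingEnd ℂ) (a j) * (starRingEnd ℂ) (b j)).re)
      ≤ 2 * α 0 * S := by
    calc (∑ j, α j * (a j * b j + (starRingEnd ℂ) (a j) * (starRingEnd ℂ) (b j)).re)
        ≤ ∑ j, α 0 * (2 * (‖a j‖ * ‖b j‖)) :=
          Finset.sum_le_sum fun j _ => hterm j
      _ = 2 * α 0 * S := by
          rw [hSdef, Finset.mul_sum]
          exact Finset.sum_congr rfl fun j _ => by ring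
  nlinarith [sq_nonneg (α 0 - S), hsum, hCS]
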